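/- For the gamma frailty Weibull competing risks model, the sub-survivor function satisfies $\overline{G}(j,t) = \int_t^\infty \frac{\gamma}{\eta_j}\left(\frac{s}{\eta_j}\right)^{\gamma-1}\left[1+\nu\sum_{j'=1}^J\left(\frac{s}{\eta_{j'}}\right)^\gamma\right]^{-1/\nu-1} ds = \frac{1}{\sum_{j'=1}^J (\eta_j/\eta_{j'})^\gamma}\left[1+\nu\sum_{j'=1}^J\left(\frac{t}{\eta_{j'}}\right)^\gamma\right]^{-1/\nu}$ for all $t \geq 0$. -/

import Mathlib

open MeasureTheory Filter Real Set Topology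

/-- The sub-survivor function of the gamma frailty Weibull competing risks
model: the integral of the sub-density over `(t, ∞)` has the stated closed form. -/
theorem stmt2 (J : ℕ) (η : Fin J → ℝ) (γ ν : ℝ)
    (hη : ∀ j, 0 < η j) (hγ : 0 < γ) (hν : 0 < ν) (j : Fin J) (t : ℝ) (ht : 0 ≤ t) :
    ∫ s in Set.Ioi t,
        γ / η j * (s / η j) ^ (γ - 1) * (1 + ν * ∑ j', (s / η j') ^ γ) ^ (-1 / ν - 1)
      = (1 / ∑ j', (η j / η j') ^ γ) * (1 + ν * ∑ j', (t / η j') ^ γ) ^ (-1 / ν) := by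
  set S : ℝ := ∑ j' : Fin J, ((η j') ^ γ)⁻¹ with hS_def
  have hS : 0 < S :=
    Finset.sum_pos (fun i _ => inv_pos.mpr (Real.rpow_pos_of_pos (hη i) γ))
      ⟨j, Finset.mem_univ j⟩
  set c : ℝ := ∑ j' : Fin J, (η j / η j') ^ γ with hc_def
  have hcS : c = (η j) ^ γ * S := by
    rw [hc_def, hS_def, Finset.mul_sum]
    refine Finset.sum_congr rfl fun i _ => ?_
    rw [Real.div_rpow (hη j).le (hη i).le, div_eq_mul_inv]
  have hc : 0 < c := by
    rw [hcS]; exact mul_pos (Real.rpow_pos_of_pos (hη j) γ) hS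
  set F : ℝ → ℝ := fun s => -(c⁻¹ * (1 + ν * ∑ j', (s / η j') ^ γ) ^ (-1 / ν)) with hF
  have hbase : ∀ s : ℝ, 0 ≤ s → 0 < 1 + ν * ∑ j' : Fin J, (s / η j') ^ γ := by
    intro s hs
    have h0 : 0 ≤ ∑ j' : Fin J, (s / η j') ^ γ :=
      Finset.sum_nonneg fun i _ => Real.rpow_nonneg (div_nonneg hs (hη i).le) _
    nlinarith
  have hderiv : ∀ s ∈ Ioi t, HasDerivAt F
      (γ / η j * (s / η j) ^ (γ - 1) * (1 + ν * ∑ j', (s / η j') ^ γ) ^ (-1 / ν - 1)) s := by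
    intro s hs
    have hs0 : 0 < s := lt_of_le_of_lt ht hs
    have hterm : ∀ i ∈ (Finset.univ : Finset (Fin J)),
        HasDerivAt (fun s : ℝ => (s / η i) ^ γ) (γ * s ^ (γ - 1) * ((η i) ^ γ)⁻¹) s := by
      intro i _
      have h1 : HasDerivAt (fun s : ℝ => s / η i) ((η i)⁻¹) s := by
        simpa [div_eq_mul_inv] using (hasDerivAt_id s).mul_const (η i)⁻¹
      have h2 : HasDerivAt (fun x : ℝ => x ^ γ) (γ * (s / η i) ^ (γ - 1)) (s / η i) :=
        Real.hasDerivAt_rpow_const (Or.inl (div_pos hs0 (hη i)).ne')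
      have h3 := h2.comp s h1
      refine h3.congr_deriv ?_
      rw [Real.div_rpow hs0.le (hη i).le,
        show (η i : ℝ) ^ (γ - 1) = (η i) ^ γ / η i by
          rw [Real.rpow_sub (hη i), Real.rpow_one]]
      have hηi : η i ≠ 0 := (hη i).ne'
      have hηiγ : (η i : ℝ) ^ γ ≠ 0 := (Real.rpow_pos_of_pos (hη i) γ).ne'
      field_simp
    have hΦ : HasDerivAt (fun s : ℝ => ∑ j' : Fin J, (s / η j') ^ γ)
        (γ * s ^ (γ - 1) * S) s := by
      have := HasDerivAt.fun_sum hterm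
      simpa [hS_def, Finset.mul_sum] using this
    set b : ℝ := 1 + ν * ∑ j' : Fin J, (s / η j') ^ γ with hb_def
    have hb : 0 < b := hbase s hs0.le
    have houter : HasDerivAt (fun y : ℝ => y ^ (-1 / ν))
        ((-1 / ν) * b ^ (-1 / ν - 1)) b :=
      Real.hasDerivAt_rpow_const (Or.inl hb.ne')
    have hinner : HasDerivAt (fun s : ℝ => 1 + ν * ∑ j' : Fin J, (s / η j') ^ γ)
        (ν * (γ * s ^ (γ - 1) * S)) s := (hΦ.const_mul ν).const_add 1
    have hfinal := ((houter.comp s hinner).const_mul c⁻¹).neg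
    refine hfinal.congr_deriv ?_
    have hν' : (ν : ℝ) ≠ 0 := hν.ne'
    have hηj : η j ≠ 0 := (hη j).ne'
    have hηjγ : (η j : ℝ) ^ γ ≠ 0 := (Real.rpow_pos_of_pos (hη j) γ).ne'
    rw [hcS, Real.div_rpow hs0.le (hη j).le,
      show (η j : ℝ) ^ (γ - 1) = (η j) ^ γ / η j by
        rw [Real.rpow_sub (hη j), Real.rpow_one]]
    field_simp
  have hnonneg : ∀ s ∈ Ioi t,
      0 ≤ γ / η j * (s / η j) ^ (γ - 1) * (1 + ν * ∑ j', (s / η j') ^ γ) ^ (-1 / ν - 1) := by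
    intro s hs
    have hs0 : 0 < s := lt_of_le_of_lt ht hs
    have h1 : 0 ≤ (s / η j) ^ (γ - 1) := Real.rpow_nonneg (div_nonneg hs0.le (hη j).le) _
    have h2 : 0 ≤ (1 + ν * ∑ j' : Fin J, (s / η j') ^ γ) ^ (-1 / ν - 1) :=
      Real.rpow_nonneg (hbase s hs0.le).le _
    have h3 : 0 ≤ γ / η j := div_nonneg hγ.le (hη j).le
    exact mul_nonneg (mul_nonneg h3 h1) h2
  have htend : Tendsto F atTop (𝓝 0) := by
    have h1 : Tendsto (fun s : ℝ => 1 + ν * ∑ j' : Fin J, (s / η j') ^ γ) atTop atTop := by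
      apply tendsto_atTop_add_const_left
      apply Tendsto.const_mul_atTop hν
      apply tendsto_atTop_mono' atTop (f₁ := fun s : ℝ => (s / η j) ^ γ) ?_ ?_
      · filter_upwards [eventually_ge_atTop (0 : ℝ)] with s hs
        exact Finset.single_le_sum (f := fun i : Fin J => (s / η i) ^ γ)
          (fun i _ => Real.rpow_nonneg (div_nonneg hs (hη i).le) γ) (Finset.mem_univ j)
      · exact (tendsto_rpow_atTop hγ).comp (tendsto_id.atTop_div_const (hη j))
    have h2 : Tendsto (fun s : ℝ => (1 + ν * ∑ j' : Fin J, (s / η j') ^ γ) ^ (-1 / ν))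
        atTop (𝓝 0) := by
      have := (tendsto_rpow_neg_atTop (y := 1 / ν) (by positivity)).comp h1
      simpa [neg_div, Function.comp_def] using this
    have := (h2.const_mul c⁻¹).neg
    simpa using this
  have hcont : ContinuousWithinAt F (Ici t) t := by
    apply ContinuousAt.continuousWithinAt
    have hΦc : ContinuousAt (fun s : ℝ => 1 + ν * ∑ j' : Fin J, (s / η j') ^ γ) t := by
      refine continuousAt_const.add (continuousAt_const.mul ?_)
      have : ∀ i ∈ (Finset.univ : Finset (Fin J)),
          ContinuousAt (fun s : ℝ => (s / η i) ^ γ) t := fun i _ =>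
        (Real.continuousAt_rpow_const _ _ (Or.inr hγ.le)).comp
          ((continuous_id.div_const (η i)).continuousAt)
      exact tendsto_finset_sum _ this
    exact ((hΦc.rpow_const (Or.inl (hbase t ht).ne')).const_mul c⁻¹).neg
  have key := integral_Ioi_of_hasDerivAt_of_nonneg hcont hderiv hnonneg htend
  rw [key, hF]
  simp [one_div]
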